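/- Let {𝒜_k}_{k≥1} be a sequence of labyrinth patterns with widths m_k ≥ 3, and set m(0) = 1 and m(k) = m_1⋯m_k. Let (t_1,t_2) and (b_1,b_2) be the Cartesian coordinates of the top exit and the bottom exit of L_∞, and for each k ≥ 1 let (x_{1,t}^k, x_{2,t}^k) be the Cartesian coordinates of the lower-left vertex of the square that is the top exit of 𝒜_k. Then t_1 = b_1 = Σ_{k=1}^∞ x_{1,t}^k / m(k−1), t_2 = 1, and b_2 = 0. -/

import Mathlib

open Set

namespace Labyrinth

/-- The closed square `S_{i,j,m} = [i/m,(i+1)/m] × [j/m,(j+1)/m]` of the `m × m` grid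
on the unit square, indexed by `p = (i,j)`. -/
def cell (m : ℕ) (p : ℕ × ℕ) : Set (ℝ × ℝ) :=
  Icc ((p.1 : ℝ) / (m : ℝ)) (((p.1 : ℝ) + 1) / (m : ℝ)) ×ˢ
    Icc ((p.2 : ℝ) / (m : ℝ)) (((p.2 : ℝ) + 1) / (m : ℝ))

/-- An `m`-pattern: a nonempty set of grid indices within the `m × m` grid. -/
def IsPattern (m : ℕ) (A : Set (ℕ × ℕ)) : Prop :=
  A.Nonempty ∧ ∀ p ∈ A, p.1 < m ∧ p.2 < m

/-- Two grid squares share a side. -/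
def SideAdj (p q : ℕ × ℕ) : Prop :=
  (p.1 = q.1 ∧ (p.2 + 1 = q.2 ∨ q.2 + 1 = p.2)) ∨
  (p.2 = q.2 ∧ (p.1 + 1 = q.1 ∨ q.1 + 1 = p.1))

/-- Two grid squares share a side or a corner. -/
def CornerAdj (p q : ℕ × ℕ) : Prop :=
  SideAdj p q ∨
  ((p.1 + 1 = q.1 ∨ q.1 + 1 = p.1) ∧ (p.2 + 1 = q.2 ∨ q.2 + 1 = p.2))

/-- The graph `𝒢(𝒜)` of a pattern: vertices are its squares, two squares being
adjacent iff they share a side. -/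
def patternGraph (A : Set (ℕ × ℕ)) : SimpleGraph ↥A where
  Adj p q := SideAdj p.1 q.1
  symm := ⟨by
    rintro ⟨p, hp⟩ ⟨q, hq⟩ h
    rcases h with ⟨h1, h2⟩ | ⟨h1, h2⟩
    · exact Or.inl ⟨h1.symm, h2.symm⟩
    · exact Or.inr ⟨h1.symm, h2.symm⟩⟩
  loopless := ⟨by
    rintro ⟨p, hp⟩ h
    rcases h with ⟨h1, h2 | h2⟩ | ⟨h1, h2 | h2⟩ <;> omega⟩

/-- The four sides of a square/pattern. -/
inductive Side | top | bottom | left | right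
deriving DecidableEq

/-- `p` is an exit square of the `m`-pattern `A` on the given side. -/
def IsExitSq (m : ℕ) (A : Set (ℕ × ℕ)) : Side → ℕ × ℕ → Prop
  | .top, p => p ∈ A ∧ p.2 = m - 1 ∧ (p.1, 0) ∈ A
  | .bottom, p => p ∈ A ∧ p.2 = 0 ∧ (p.1, m - 1) ∈ A
  | .left, p => p ∈ A ∧ p.1 = 0 ∧ (m - 1, p.2) ∈ A
  | .right, p => p ∈ A ∧ p.1 = m - 1 ∧ (0, p.2) ∈ A

/-- An `m × m`-labyrinth pattern: a nonempty `m`-pattern, `m ≥ 3`, whose graph is a tree,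
with exactly one vertical and exactly one horizontal exit pair, and no two white squares
at diagonally opposite corners. -/
def IsLabyrinthPattern (m : ℕ) (A : Set (ℕ × ℕ)) : Prop :=
  3 ≤ m ∧ IsPattern m A ∧ (patternGraph A).IsTree ∧
    (∃! i : ℕ, (i, m - 1) ∈ A ∧ (i, 0) ∈ A) ∧
    (∃! j : ℕ, (0, j) ∈ A ∧ (m - 1, j) ∈ A) ∧
    ((0, 0) ∈ A → (m - 1, m - 1) ∉ A) ∧
    ((m - 1, 0) ∈ A → (0, m - 1) ∉ A)

/-- A wild labyrinth pattern: the graph is merely connected, and there is at least one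
vertical and at least one horizontal exit pair. -/
def IsWildLabyrinthPattern (m : ℕ) (A : Set (ℕ × ℕ)) : Prop :=
  3 ≤ m ∧ IsPattern m A ∧ (patternGraph A).Connected ∧
    (∃ i : ℕ, (i, m - 1) ∈ A ∧ (i, 0) ∈ A) ∧
    (∃ j : ℕ, (0, j) ∈ A ∧ (m - 1, j) ∈ A) ∧
    ((0, 0) ∈ A → (m - 1, m - 1) ∉ A) ∧
    ((m - 1, 0) ∈ A → (0, m - 1) ∉ A)

/-- One substitution step: place a copy of the pattern `A'` (of width `m'`) into each
white square of `W`. -/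
def subst (m' : ℕ) (A' W : Set (ℕ × ℕ)) : Set (ℕ × ℕ) :=
  {q | ∃ p ∈ W, ∃ r ∈ A', q = (p.1 * m' + r.1, p.2 * m' + r.2)}

/-- The white squares `𝒲_n` of level `n`; `whites m A n` is the paper's `𝒲_n`, where
`A k` is the paper's pattern `𝒜_{k+1}` of width `m k = m_{k+1}`; level `0` is the whole
unit square. -/
def whites (m : ℕ → ℕ) (A : ℕ → Set (ℕ × ℕ)) : ℕ → Set (ℕ × ℕ)
  | 0 => {(0, 0)}
  | n + 1 => subst (m n) (A n) (whites m A n)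

/-- `m(n) = m_1 ⋯ m_n`. -/
def mProd (m : ℕ → ℕ) (n : ℕ) : ℕ := ∏ k ∈ Finset.range n, m k

/-- The black squares `ℬ_n` of level `n`. -/
def blacks (m : ℕ → ℕ) (A : ℕ → Set (ℕ × ℕ)) (n : ℕ) : Set (ℕ × ℕ) :=
  {p : ℕ × ℕ | p.1 < mProd m n ∧ p.2 < mProd m n} \ whites m A n

/-- A border square of the `m × m` grid. -/
def IsBorder (m : ℕ) (p : ℕ × ℕ) : Prop :=
  p.1 = 0 ∨ p.2 = 0 ∨ p.1 = m - 1 ∨ p.2 = m - 1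

/-- `L_n`, the union of the white squares of level `n`. -/
def levelSet (m : ℕ → ℕ) (A : ℕ → Set (ℕ × ℕ)) (n : ℕ) : Set (ℝ × ℝ) :=
  ⋃ p ∈ whites m A n, cell (mProd m n) p

/-- `L_∞ = ⋂_{n ≥ 1} L_n` (the term `n = 0` is the whole unit square). -/
def limitSet (m : ℕ → ℕ) (A : ℕ → Set (ℕ × ℕ)) : Set (ℝ × ℝ) :=
  ⋂ n, levelSet m A n

def unitSquare : Set (ℝ × ℝ) := Icc (0 : ℝ) 1 ×ˢ Icc (0 : ℝ) 1

/-- A path in a graph (with adjacency `Adj`, within the vertex set `A`)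
from `u` to `v`: a nonempty list of distinct, consecutively adjacent squares of `A`,
starting at `u` and ending at `v`. -/
def IsPathIn (Adj : ℕ × ℕ → ℕ × ℕ → Prop) (A : Set (ℕ × ℕ))
    (l : List (ℕ × ℕ)) (u v : ℕ × ℕ) : Prop :=
  l ≠ [] ∧ l.Nodup ∧ l.Chain' Adj ∧ (∀ p ∈ l, p ∈ A) ∧
    l.head? = some u ∧ l.getLast? = some v

/-- `s` is an arc between `a` and `b`: a homeomorphic image of `[0,1]`
with endpoints `a` and `b`. -/
def IsArc (s : Set (ℝ × ℝ)) (a b : ℝ × ℝ) : Prop :=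
  ∃ f : ℝ → ℝ × ℝ, ContinuousOn f (Icc 0 1) ∧ InjOn f (Icc 0 1) ∧
    f '' Icc 0 1 = s ∧ f 0 = a ∧ f 1 = b

/-- `e` is the exit point of `L_∞` of the given type: for every `n ≥ 1` it lies in the
exit square of that type of `𝒲_n`. -/
def IsExitPoint (m : ℕ → ℕ) (A : ℕ → Set (ℕ × ℕ)) (s : Side) (e : ℝ × ℝ) : Prop :=
  ∀ n, 1 ≤ n → ∃ p, IsExitSq (mProd m n) (whites m A n) s p ∧ e ∈ cell (mProd m n) p

/-- The (closed) edge of the grid square `p` of the `m × m` grid on the given side. -/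
def cellEdge (m : ℕ) (p : ℕ × ℕ) : Side → Set (ℝ × ℝ)
  | .top => Icc ((p.1 : ℝ) / (m : ℝ)) (((p.1 : ℝ) + 1) / (m : ℝ)) ×ˢ {((p.2 : ℝ) + 1) / (m : ℝ)}
  | .bottom => Icc ((p.1 : ℝ) / (m : ℝ)) (((p.1 : ℝ) + 1) / (m : ℝ)) ×ˢ {(p.2 : ℝ) / (m : ℝ)}
  | .left => {(p.1 : ℝ) / (m : ℝ)} ×ˢ Icc ((p.2 : ℝ) / (m : ℝ)) (((p.2 : ℝ) + 1) / (m : ℝ))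
  | .right => {((p.1 : ℝ) + 1) / (m : ℝ)} ×ˢ Icc ((p.2 : ℝ) / (m : ℝ)) (((p.2 : ℝ) + 1) / (m : ℝ))

/-- Directions in the grid. -/
inductive Dir | up | down | left | right
deriving DecidableEq

/-- `stepDir p q d`: the square `q` is the neighbour of `p` in direction `d`. -/
def stepDir (p q : ℕ × ℕ) : Dir → Prop
  | .up => q.1 = p.1 ∧ q.2 = p.2 + 1
  | .down => q.1 = p.1 ∧ p.2 = q.2 + 1
  | .left => q.2 = p.2 ∧ p.1 = q.1 + 1
  | .right => q.2 = p.2 ∧ q.1 = p.1 + 1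

/-- The outward direction through a given side. -/
def outDir : Side → Dir
  | .top => .up
  | .bottom => .down
  | .left => .left
  | .right => .right

def sideOfDir : Dir → Side
  | .up => .top
  | .down => .bottom
  | .left => .left
  | .right => .right

/-- The six types `A, B, C, D, E, F` of paths (and of squares within a path). -/
inductive PTy | A | B | C | D | E | F
deriving DecidableEq

instance : Fintype PTy :=
  ⟨{PTy.A, PTy.B, PTy.C, PTy.D, PTy.E, PTy.F}, by intro x; cases x <;> decide⟩

/-- The exit at which the `x`-path starts: `A`: top→bottom, `B`: left→right,
`C`: top→right, `D`: right→bottom, `E`: bottom→left, `F`: left→top. -/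
def startSide : PTy → Side
  | .A => .top
  | .B => .left
  | .C => .top
  | .D => .right
  | .E => .bottom
  | .F => .left

/-- The exit at which the `x`-path ends. -/
def endSide : PTy → Side
  | .A => .bottom
  | .B => .right
  | .C => .right
  | .D => .bottom
  | .E => .left
  | .F => .top

/-- The two neighbour directions characterising a square of each type. -/
def ptyDirPair : PTy → Dir × Dir
  | .A => (.up, .down)
  | .B => (.left, .right)
  | .C => (.up, .right)
  | .D => (.right, .down)
  | .E => (.down, .left)
  | .F => (.left, .up)

def ptyDirs (τ : PTy) : Set Dir := {(ptyDirPair τ).1, (ptyDirPair τ).2}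

/-- The set of directions from the `i`-th square of the path `l` towards its neighbours
within the path, where the first and last squares (exit squares) are regarded as having
an additional neighbour outside the unit square, in directions `dstart`, `dend`
respectively. -/
def pathDirs (l : List (ℕ × ℕ)) (dstart dend : Dir) (i : ℕ) : Set Dir :=
  {d | (∃ p q, l[i]? = some p ∧ l[i - 1]? = some q ∧ 0 < i ∧ stepDir p q d)
    ∨ (∃ p q, l[i]? = some p ∧ l[i + 1]? = some q ∧ stepDir p q d)
    ∨ (i = 0 ∧ d = dstart)
    ∨ (i + 1 = l.length ∧ d = dend)}

/-- The number of `τ`-squares of the path `l` (with outward exit directions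
`dstart`, `dend`). -/
noncomputable def countTy (l : List (ℕ × ℕ)) (dstart dend : Dir) (τ : PTy) : ℕ :=
  {i | i < l.length ∧ pathDirs l dstart dend i = ptyDirs τ}.ncard

/-- `M(n) = M_1 ⋅ M_2 ⋅ ⋯ ⋅ M_n`. -/
def matProd (M : ℕ → Matrix PTy PTy ℕ) (n : ℕ) : Matrix PTy PTy ℕ :=
  ((List.range n).map M).prod

/-- A simple closed curve: a subspace homeomorphic to the circle. -/
def IsSimpleClosedCurve (s : Set (ℝ × ℝ)) : Prop :=
  Nonempty (↥s ≃ₜ AddCircle (1 : ℝ))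

/-- The number of `δ`-mesh squares meeting `E`. -/
noncomputable def meshCount (δ : ℝ) (E : Set (ℝ × ℝ)) : ℕ :=
  {q : ℤ × ℤ | (E ∩ (Icc ((q.1 : ℝ) * δ) (((q.1 : ℝ) + 1) * δ) ×ˢ
      Icc ((q.2 : ℝ) * δ) (((q.2 : ℝ) + 1) * δ))).Nonempty}.ncard

/-- The lower box-counting dimension of `E ⊆ ℝ²`. -/
noncomputable def lowerBoxDim (E : Set (ℝ × ℝ)) : ℝ :=
  Filter.liminf (fun δ : ℝ => Real.log (meshCount δ E) / (-Real.log δ)) (nhdsWithin 0 (Ioi 0))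

/-- The upper box-counting dimension of `E ⊆ ℝ²`. -/
noncomputable def upperBoxDim (E : Set (ℝ × ℝ)) : ℝ :=
  Filter.limsup (fun δ : ℝ => Real.log (meshCount δ E) / (-Real.log δ)) (nhdsWithin 0 (Ioi 0))

end Labyrinth

namespace LabyrinthAux

open Labyrinth

/-- The column of the vertical exit pair of `𝒲_n`. -/
def exitCol (m tc : ℕ → ℕ) : ℕ → ℕ
  | 0 => 0
  | n + 1 => exitCol m tc n * m n + tc n

lemma euclid_unique {b a c a' c' : ℕ} (hc : c < b) (hc' : c' < b)
    (h : a * b + c = a' * b + c') : a = a' ∧ c = c' := by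
  have hb : 0 < b := Nat.pos_of_ne_zero (by omega)
  have h1 : (a * b + c) / b = a := by
    rw [Nat.mul_comm, Nat.mul_add_div hb, Nat.div_eq_of_lt hc, Nat.add_zero]
  have h2 : (a' * b + c') / b = a' := by
    rw [Nat.mul_comm, Nat.mul_add_div hb, Nat.div_eq_of_lt hc', Nat.add_zero]
  have ha : a = a' := by rw [← h1, h, h2]
  subst ha
  exact ⟨rfl, by omega⟩

end LabyrinthAux

open Labyrinth in
/-- coordinates of the top and bottom exits of `L_∞`. With `tc k` the
column index of the top exit square of `𝒜_{k+1}` (so its lower-left vertex has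
coordinates `(tc k / m k, (m k - 1)/m k)`), the top exit is
`(Σ_k (tc k / m k)/m(k), 1)` and the bottom exit is `(Σ_k (tc k / m k)/m(k), 0)`. -/
theorem top_bottom_exit_coords (m : ℕ → ℕ) (A : ℕ → Set (ℕ × ℕ))
    (hlab : ∀ k, IsLabyrinthPattern (m k) (A k))
    (t b : ℝ × ℝ)
    (ht : IsExitPoint m A Side.top t) (hb : IsExitPoint m A Side.bottom b)
    (tc : ℕ → ℕ) (htc : ∀ k, IsExitSq (m k) (A k) Side.top (tc k, m k - 1)) :
    t.1 = ∑' k, ((tc k : ℝ) / (m k : ℝ)) / (mProd m k : ℝ) ∧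
    b.1 = ∑' k, ((tc k : ℝ) / (m k : ℝ)) / (mProd m k : ℝ) ∧
    t.2 = 1 ∧ b.2 = 0 := by
  classical
  set N := LabyrinthAux.exitCol m tc with hN
  have hm3 : ∀ k, 3 ≤ m k := fun k => (hlab k).1
  have hpat : ∀ k, ∀ p ∈ A k, p.1 < m k ∧ p.2 < m k := fun k => (hlab k).2.1.2
  have hMpos : ∀ n, 0 < mProd m n := by
    intro n
    apply Finset.prod_pos
    intro k _
    have := hm3 k; omega
  have hMsucc : ∀ n, mProd m (n + 1) = mProd m n * m n := fun n =>
    Finset.prod_range_succ _ _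
  -- the unique vertical exit column of `𝒲_n` is `N n`
  have key : ∀ n i, ((i, mProd m n - 1) ∈ whites m A n ∧ (i, 0) ∈ whites m A n) ↔ i = N n := by
    intro n
    induction n with
    | zero =>
      intro i
      simp [whites, mProd, hN, LabyrinthAux.exitCol, Prod.ext_iff]
    | succ n ih =>
      intro i
      constructor
      · rintro ⟨htop, hbot⟩
        rw [show whites m A (n + 1) = subst (m n) (A n) (whites m A n) from rfl] at htop hbot
        obtain ⟨p, hp, r, hr, heq⟩ := htop
        obtain ⟨p', hp', r', hr', heq'⟩ := hbot
        rw [Prod.ext_iff] at heq heq'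
        simp only at heq heq'
        have hr1 := hpat n r hr
        have hr1' := hpat n r' hr'
        have hMn := hMpos n
        have hmn := hm3 n
        have hle : m n ≤ mProd m n * m n := Nat.le_mul_of_pos_left (m n) hMn
        -- top decomposition
        have e1 : p.2 * m n + r.2 = (mProd m n - 1) * m n + (m n - 1) := by
          rw [Nat.sub_mul]
          rw [hMsucc n] at heq
          omega
        obtain ⟨hp2, hr2⟩ := LabyrinthAux.euclid_unique hr1.2 (by omega) e1
        -- bottom decomposition
        have hp'2 : p'.2 = 0 ∧ r'.2 = 0 := by
          have h0 : p'.2 * m n + r'.2 = 0 := heq'.2.symm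
          have : p'.2 * m n = 0 := by omega
          rcases Nat.mul_eq_zero.mp this with h | h
          · exact ⟨h, by omega⟩
          · omega
        -- same column
        have ecol : p.1 * m n + r.1 = p'.1 * m n + r'.1 := by omega
        obtain ⟨hpp, hrr⟩ := LabyrinthAux.euclid_unique hr1.1 hr1'.1 ecol
        -- p is an exit column of 𝒲_n
        have hw1 : (p.1, mProd m n - 1) ∈ whites m A n := by
          have : (p.1, mProd m n - 1) = p := by
            rw [Prod.ext_iff]; exact ⟨rfl, hp2.symm⟩
          rw [this]; exact hp
        have hw0 : (p.1, 0) ∈ whites m A n := by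
          have : (p.1, 0) = p' := by
            rw [Prod.ext_iff]; exact ⟨hpp, hp'2.1.symm⟩
          rw [this]; exact hp'
        have hpN : p.1 = N n := (ih p.1).mp ⟨hw1, hw0⟩
        -- r.1 is the exit column of A n
        have huniq := (hlab n).2.2.2.1
        obtain ⟨j, _, hju⟩ := huniq
        have hra : (r.1, m n - 1) ∈ A n := by
          have : (r.1, m n - 1) = r := by rw [Prod.ext_iff]; exact ⟨rfl, hr2.symm⟩
          rw [this]; exact hr
        have hra0 : (r.1, 0) ∈ A n := by
          have : (r.1, 0) = r' := by rw [Prod.ext_iff]; exact ⟨hrr, hp'2.2.symm⟩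
          rw [this]; exact hr'
        have htcn := htc n
        have hrtc : r.1 = tc n := by
          have h1 := hju r.1 ⟨hra, hra0⟩
          have h2 := hju (tc n) ⟨htcn.1, htcn.2.2⟩
          omega
        show i = LabyrinthAux.exitCol m tc (n + 1)
        rw [LabyrinthAux.exitCol]
        have hNn : LabyrinthAux.exitCol m tc n = N n := rfl
        rw [hNn, ← hpN, ← hrtc]
        exact heq.1
      · rintro rfl
        have hMn := hMpos n
        have hmn := hm3 n
        have hle : m n ≤ mProd m n * m n := Nat.le_mul_of_pos_left (m n) hMn
        have hw1 : (N n, mProd m n - 1) ∈ whites m A n := ((ih (N n)).mpr rfl).1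
        have hw0 : (N n, 0) ∈ whites m A n := ((ih (N n)).mpr rfl).2
        have htcn := htc n
        constructor
        · rw [show whites m A (n + 1) = subst (m n) (A n) (whites m A n) from rfl]
          refine ⟨(N n, mProd m n - 1), hw1, (tc n, m n - 1), htcn.1, ?_⟩
          rw [Prod.ext_iff]
          constructor
          · rfl
          · show mProd m (n + 1) - 1 = (mProd m n - 1) * m n + (m n - 1)
            rw [Nat.sub_mul, hMsucc n]
            omega
        · rw [show whites m A (n + 1) = subst (m n) (A n) (whites m A n) from rfl]
          exact ⟨(N n, 0), hw0, (tc n, 0), htcn.2.2, by rw [Prod.ext_iff]; exact ⟨rfl, by omega⟩⟩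
  -- basic real facts about mProd
  have hMR : ∀ n, (0 : ℝ) < (mProd m n : ℝ) := fun n => by exact_mod_cast hMpos n
  -- bounds for t and b
  have hbound : ∀ n, 1 ≤ n →
      ((N n : ℝ) / (mProd m n : ℝ) ≤ t.1 ∧ t.1 ≤ ((N n : ℝ) + 1) / (mProd m n : ℝ) ∧
       1 - 1 / (mProd m n : ℝ) ≤ t.2 ∧ t.2 ≤ 1) ∧
      ((N n : ℝ) / (mProd m n : ℝ) ≤ b.1 ∧ b.1 ≤ ((N n : ℝ) + 1) / (mProd m n : ℝ) ∧
       0 ≤ b.2 ∧ b.2 ≤ 1 / (mProd m n : ℝ)) := by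
    intro n hn
    have hMn := hMpos n
    have hMnR := hMR n
    obtain ⟨p, hex, hmem⟩ := ht n hn
    obtain ⟨q, hex', hmem'⟩ := hb n hn
    obtain ⟨hpw, hp2, hpb⟩ := hex
    obtain ⟨hqw, hq2, hqt⟩ := hex'
    have hpN : p.1 = N n := (key n p.1).mp ⟨by
      have : (p.1, mProd m n - 1) = p := by rw [Prod.ext_iff]; exact ⟨rfl, hp2.symm⟩
      rw [this]; exact hpw, hpb⟩
    have hqN : q.1 = N n := (key n q.1).mp ⟨hqt, by
      have : (q.1, 0) = q := by rw [Prod.ext_iff]; exact ⟨rfl, hq2.symm⟩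
      rw [this]; exact hqw⟩
    rw [cell, Set.mem_prod] at hmem hmem'
    obtain ⟨⟨ht1l, ht1r⟩, ⟨ht2l, ht2r⟩⟩ := hmem
    obtain ⟨⟨hb1l, hb1r⟩, ⟨hb2l, hb2r⟩⟩ := hmem'
    rw [hpN] at ht1l ht1r
    rw [hqN] at hb1l hb1r
    rw [hp2] at ht2l ht2r
    rw [hq2] at hb2l hb2r
    have hcast : ((mProd m n - 1 : ℕ) : ℝ) = (mProd m n : ℝ) - 1 := by
      rw [Nat.cast_sub (by omega)]; norm_num
    refine ⟨⟨ht1l, ht1r, ?_, ?_⟩, ⟨hb1l, hb1r, ?_, ?_⟩⟩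
    · calc 1 - 1 / (mProd m n : ℝ) = ((mProd m n : ℝ) - 1) / (mProd m n : ℝ) := by
            field_simp
        _ ≤ t.2 := by rw [← hcast]; exact ht2l
    · calc t.2 ≤ ((mProd m n - 1 : ℕ) + 1 : ℝ) / (mProd m n : ℝ) := ht2r
        _ = 1 := by rw [hcast]; field_simp; ring
    · calc (0 : ℝ) = (0 : ℝ) / (mProd m n : ℝ) := by norm_num
        _ ≤ b.2 := by exact_mod_cast hb2l
    · calc b.2 ≤ ((0 : ℕ) + 1 : ℝ) / (mProd m n : ℝ) := hb2r
        _ = 1 / (mProd m n : ℝ) := by norm_num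
  -- mProd tends to infinity
  have hMge : ∀ n, (3 : ℝ) ^ n ≤ (mProd m n : ℝ) := by
    intro n
    induction n with
    | zero => simp [mProd]
    | succ n ih =>
      rw [hMsucc n]
      push_cast
      have h3 : (3 : ℝ) ≤ (m n : ℝ) := by exact_mod_cast hm3 n
      have := hMR n
      calc (3 : ℝ) ^ (n + 1) = 3 ^ n * 3 := by ring
        _ ≤ (mProd m n : ℝ) * (m n : ℝ) := by
            apply mul_le_mul ih h3 (by norm_num) (le_of_lt this)
  have hMtend : Filter.Tendsto (fun n => (mProd m n : ℝ)) Filter.atTop Filter.atTop :=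
    Filter.tendsto_atTop_mono hMge (tendsto_pow_atTop_atTop_of_one_lt (by norm_num))
  have hinv : Filter.Tendsto (fun n => 1 / (mProd m n : ℝ)) Filter.atTop (nhds 0) := by
    have h := hMtend.inv_tendsto_atTop; simp only [one_div]; exact h
  -- partial sums
  have hpart : ∀ n, ∑ k ∈ Finset.range n, ((tc k : ℝ) / (m k : ℝ)) / (mProd m k : ℝ)
      = (N n : ℝ) / (mProd m n : ℝ) := by
    intro n
    induction n with
    | zero => simp [mProd, hN, LabyrinthAux.exitCol]
    | succ n ih =>
      rw [Finset.sum_range_succ, ih]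
      have h1 : (mProd m (n + 1) : ℝ) = (mProd m n : ℝ) * (m n : ℝ) := by
        rw [hMsucc n]; push_cast; ring
      have h2 : (N (n + 1) : ℝ) = (N n : ℝ) * (m n : ℝ) + (tc n : ℝ) := by
        show ((LabyrinthAux.exitCol m tc (n + 1) : ℕ) : ℝ) = _
        rw [LabyrinthAux.exitCol]; push_cast; ring
      have hm0 : (m n : ℝ) ≠ 0 := by
        have := hm3 n; positivity
      have hM0 : (mProd m n : ℝ) ≠ 0 := ne_of_gt (hMR n)
      rw [h1, h2]
      field_simp
  -- the partial sums converge to t.1 and to b.1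
  have hts : Filter.Tendsto (fun n => (N n : ℝ) / (mProd m n : ℝ))
      Filter.atTop (nhds t.1) := by
    apply tendsto_of_tendsto_of_tendsto_of_le_of_le'
      (g := fun n => t.1 - 1 / (mProd m n : ℝ)) (h := fun _ => t.1)
    · simpa using tendsto_const_nhds.sub hinv
    · exact tendsto_const_nhds
    · filter_upwards [Filter.eventually_ge_atTop 1] with n hn
      have h := ((hbound n hn).1).2.1
      have : ((N n : ℝ) + 1) / (mProd m n : ℝ)
          = (N n : ℝ) / (mProd m n : ℝ) + 1 / (mProd m n : ℝ) := by
        rw [add_div]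
      linarith [this ▸ h]
    · filter_upwards [Filter.eventually_ge_atTop 1] with n hn
      exact ((hbound n hn).1).1
  have hbs : Filter.Tendsto (fun n => (N n : ℝ) / (mProd m n : ℝ))
      Filter.atTop (nhds b.1) := by
    apply tendsto_of_tendsto_of_tendsto_of_le_of_le'
      (g := fun n => b.1 - 1 / (mProd m n : ℝ)) (h := fun _ => b.1)
    · simpa using tendsto_const_nhds.sub hinv
    · exact tendsto_const_nhds
    · filter_upwards [Filter.eventually_ge_atTop 1] with n hn
      have h := ((hbound n hn).2).2.1
      have : ((N n : ℝ) + 1) / (mProd m n : ℝ)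
          = (N n : ℝ) / (mProd m n : ℝ) + 1 / (mProd m n : ℝ) := by
        rw [add_div]
      linarith [this ▸ h]
    · filter_upwards [Filter.eventually_ge_atTop 1] with n hn
      exact ((hbound n hn).2).1
  have hnonneg : ∀ k, (0 : ℝ) ≤ ((tc k : ℝ) / (m k : ℝ)) / (mProd m k : ℝ) := by
    intro k; positivity
  have hsum : HasSum (fun k => ((tc k : ℝ) / (m k : ℝ)) / (mProd m k : ℝ)) t.1 := by
    rw [hasSum_iff_tendsto_nat_of_nonneg hnonneg]
    have : (fun n => ∑ k ∈ Finset.range n, ((tc k : ℝ) / (m k : ℝ)) / (mProd m k : ℝ))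
        = fun n => (N n : ℝ) / (mProd m n : ℝ) := funext hpart
    rw [this]
    exact hts
  have hbt : b.1 = t.1 := tendsto_nhds_unique hbs hts
  refine ⟨hsum.tsum_eq.symm, by rw [hbt]; exact hsum.tsum_eq.symm, ?_, ?_⟩
  · -- t.2 = 1
    have h1 : (1 : ℝ) ≤ t.2 := by
      apply le_of_tendsto (f := fun n => 1 - 1 / (mProd m n : ℝ)) (x := Filter.atTop)
      · simpa using tendsto_const_nhds.sub hinv
      · filter_upwards [Filter.eventually_ge_atTop 1] with n hn
        exact ((hbound n hn).1).2.2.1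
    have h2 : t.2 ≤ 1 := ((hbound 1 le_rfl).1).2.2.2
    linarith
  · -- b.2 = 0
    have h1 : b.2 ≤ 0 := by
      apply ge_of_tendsto (f := fun n => 1 / (mProd m n : ℝ)) (x := Filter.atTop) hinv
      filter_upwards [Filter.eventually_ge_atTop 1] with n hn
      exact ((hbound n hn).2).2.2.2
    have h2 : (0 : ℝ) ≤ b.2 := ((hbound 1 le_rfl).2).2.2.1
    linarith
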